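/- Let R be a right noetherian ring possessing right Krull dimension α, and suppose R is right Krull-homogeneous (every nonzero right ideal of R has Krull dimension α). Let I_1, ..., I_n be ideals of R such that each quotient ring R/I_i is right Krull-homogeneous of Krull dimension α, and let I = ∩ I_i. If K is a right ideal of R containing I with Krull dimension of K/I strictly less than α, then K ⊆ I_j for every j, and hence K = I; consequently R/I is right Krull-homogeneous of Krull dimension α. -/

import Mathlib

universe u

/-- Gabriel–Rentschler deviation: `M` has Krull dimension `≤ α`: every descending chain of
submodules has all but finitely many factors of Krull dimension `< α`. -/
def KdimLE (R : Type u) [Ring R] (α : Ordinal.{u}) (M : Type u)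
    [AddCommGroup M] [Module R M] : Prop :=
  ∀ f : ℕ → Submodule R M, (∀ n, f (n + 1) ≤ f n) →
    ∃ N : ℕ, ∀ n ≥ N, f n = f (n + 1) ∨
      ∃ β : {γ : Ordinal.{u} // γ < α},
        KdimLE R β.1 (↥(f n) ⧸ (f (n + 1)).comap (f n).subtype)
termination_by α
decreasing_by exact β.2

open Classical in
/-- The Gabriel–Rentschler Krull dimension of a module (`⊥` for the zero module).
For a right module take `R := Sᵐᵒᵖ`. -/
noncomputable def kdim (R : Type u) [Ring R] (M : Type u)
    [AddCommGroup M] [Module R M] : WithBot Ordinal.{u} :=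
  if Subsingleton M then ⊥ else ↑(sInf {α : Ordinal.{u} | KdimLE R α M})

/-- `M` is a Krull-homogeneous `R`-module of Krull dimension `α`:
every nonzero submodule has Krull dimension `α`. -/
def IsKrullHomogeneous (R : Type u) [Ring R] (M : Type u) [AddCommGroup M]
    [Module R M] (α : WithBot Ordinal.{u}) : Prop :=
  ∀ N : Submodule R M, N ≠ ⊥ → kdim R ↥N = α

namespace TwoSidedIdeal

/-- The underlying right ideal of a two-sided ideal. -/
def rightIdeal {R : Type u} [Ring R] (P : TwoSidedIdeal R) :
    Submodule Rᵐᵒᵖ R where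
  carrier := P
  add_mem' := P.add_mem
  zero_mem' := P.zero_mem
  smul_mem' := fun _ _ hx => P.mul_mem_right _ _ hx

/-- A two-sided ideal `P` is prime: `P ≠ R` and `aRb ⊆ P` implies `a ∈ P` or `b ∈ P`. -/
def IsPrime {R : Type u} [Ring R] (P : TwoSidedIdeal R) : Prop :=
  P ≠ ⊤ ∧ ∀ a b : R, (∀ r : R, a * r * b ∈ P) → a ∈ P ∨ b ∈ P

/-- A two-sided ideal `P` is semiprime: `aRa ⊆ P` implies `a ∈ P`. -/
def IsSemiprime {R : Type u} [Ring R] (P : TwoSidedIdeal R) : Prop :=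
  ∀ a : R, (∀ r : R, a * r * a ∈ P) → a ∈ P

/-- A minimal prime of `R`. -/
def IsMinimalPrime {R : Type u} [Ring R] (P : TwoSidedIdeal R) : Prop :=
  P.IsPrime ∧ ∀ Q : TwoSidedIdeal R, Q.IsPrime → Q ≤ P → Q = P

/-- `I ^ n = 0`, phrased as: every product of `n` elements of `I` vanishes. -/
def PowEqZero {R : Type u} [Ring R] (I : TwoSidedIdeal R) (n : ℕ) : Prop :=
  ∀ f : Fin n → R, (∀ i, f i ∈ I) → (List.ofFn f).prod = 0

end TwoSidedIdeal

/-- The right ideal `L·T` generated by products `l * t`, `l ∈ L`, `t ∈ T`. -/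
def mulSpan {R : Type u} [Ring R] (L : Submodule Rᵐᵒᵖ R) (T : TwoSidedIdeal R) :
    Submodule Rᵐᵒᵖ R :=
  Submodule.span Rᵐᵒᵖ {x : R | ∃ l ∈ L, ∃ t ∈ T, x = l * t}

/-- `c` is regular modulo `P`: its image in `R/P` is neither a left nor a right
zero divisor. -/
def IsRegularMod {R : Type u} [Ring R] (P : TwoSidedIdeal R) (c : R) : Prop :=
  ∀ x : R, (c * x ∈ P → x ∈ P) ∧ (x * c ∈ P → x ∈ P)

section Factor
variable {R M M' : Type u} [Ring R] [AddCommGroup M] [Module R M]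
  [AddCommGroup M'] [Module R M']

noncomputable def factorEquiv (φ : M →ₗ[R] M') (A A' : Submodule R M)
    (hle : A' ≤ A) (hker : LinearMap.ker φ ⊓ A ≤ A') :
    (↥A ⧸ A'.comap A.subtype) ≃ₗ[R]
      (↥(A.map φ) ⧸ (A'.map φ).comap (A.map φ).subtype) := by
  have hres : ∀ x ∈ A, φ x ∈ A.map φ := fun x hx => Submodule.mem_map_of_mem hx
  set ψ : ↥A →ₗ[R] (↥(A.map φ) ⧸ (A'.map φ).comap (A.map φ).subtype) :=
    ((A'.map φ).comap (A.map φ).subtype).mkQ.comp (φ.restrict hres) with hψ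
  have hkerψ : LinearMap.ker ψ = A'.comap A.subtype := by
    ext ⟨x, hx⟩
    simp only [hψ, LinearMap.mem_ker, LinearMap.comp_apply, Submodule.mkQ_apply,
      Submodule.Quotient.mk_eq_zero, Submodule.mem_comap, Submodule.coe_subtype,
      LinearMap.restrict_apply, Submodule.coe_subtype]
    constructor
    · rintro h
      obtain ⟨a, ha, hax⟩ := h
      have : x - a ∈ LinearMap.ker φ ⊓ A := by
        constructor
        · simp [LinearMap.mem_ker, map_sub, hax]
        · exact A.sub_mem hx (hle ha)
      have := hker this
      have h2 : x - a + a ∈ A' := A'.add_mem this ha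
      rwa [sub_add_cancel] at h2
    · intro h
      exact Submodule.mem_map_of_mem h
  have hsurj : Function.Surjective ψ := by
    intro y
    obtain ⟨⟨z, hz⟩, rfl⟩ := Submodule.mkQ_surjective _ y
    obtain ⟨x, hx, rfl⟩ := hz
    exact ⟨⟨x, hx⟩, rfl⟩
  exact (Submodule.quotEquivOfEq _ _ hkerψ.symm).trans (ψ.quotKerEquivOfSurjective hsurj)
end Factor

section Transfer
variable {R M M' : Type u} [Ring R] [AddCommGroup M] [Module R M]
  [AddCommGroup M'] [Module R M']

theorem kdimLE_congr_all (α : Ordinal.{u}) :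
    ∀ (M M' : Type u) [AddCommGroup M] [Module R M] [AddCommGroup M'] [Module R M']
      (_ : M ≃ₗ[R] M'), KdimLE R α M → KdimLE R α M' := by
  induction α using Ordinal.induction with
  | _ α IH =>
  intro M M' _ _ _ _ e h
  rw [KdimLE] at h ⊢
  intro f hf
  obtain ⟨N, hN⟩ := h (fun n => (f n).comap (e : M →ₗ[R] M'))
    (fun n => Submodule.comap_mono (hf n))
  refine ⟨N, fun n hn => ?_⟩
  rcases hN n hn with h1 | ⟨β, hβ⟩
  · left
    exact Submodule.comap_injective_of_surjective e.surjective h1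
  · right
    refine ⟨β, ?_⟩
    have hk : LinearMap.ker (e : M →ₗ[R] M') ⊓ (f n).comap (e : M →ₗ[R] M') ≤
        (f (n+1)).comap (e : M →ₗ[R] M') := by
      rw [LinearMap.ker_eq_bot.mpr e.injective]
      simp
    have key := factorEquiv (e : M →ₗ[R] M') ((f n).comap (e : M →ₗ[R] M'))
      ((f (n+1)).comap (e : M →ₗ[R] M')) (Submodule.comap_mono (hf n)) hk
    have hs : Function.Surjective ⇑(e : M →ₗ[R] M') := e.surjective
    rw [Submodule.map_comap_eq_of_surjective hs,
      Submodule.map_comap_eq_of_surjective hs] at key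
    exact IH β.1 β.2 _ _ key hβ

theorem kdimLE_congr (α : Ordinal.{u}) (e : M ≃ₗ[R] M')
    (h : KdimLE R α M) : KdimLE R α M' :=
  kdimLE_congr_all α M M' e h

theorem kdimLE_of_surjective (α : Ordinal.{u}) (φ : M →ₗ[R] M')
    (hφ : Function.Surjective φ) (h : KdimLE R α M) : KdimLE R α M' := by
  rw [KdimLE] at h ⊢
  intro f hf
  obtain ⟨N, hN⟩ := h (fun n => (f n).comap φ) (fun n => Submodule.comap_mono (hf n))
  refine ⟨N, fun n hn => ?_⟩
  rcases hN n hn with h1 | ⟨β, hβ⟩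
  · left
    exact Submodule.comap_injective_of_surjective hφ h1
  · right
    refine ⟨β, ?_⟩
    have hk : LinearMap.ker φ ⊓ (f n).comap φ ≤ (f (n+1)).comap φ :=
      le_trans inf_le_left (Submodule.comap_mono (bot_le : ⊥ ≤ f (n+1)))
    have key := factorEquiv φ ((f n).comap φ) ((f (n+1)).comap φ)
      (Submodule.comap_mono (hf n)) hk
    rw [Submodule.map_comap_eq_of_surjective hφ,
      Submodule.map_comap_eq_of_surjective hφ] at key
    exact kdimLE_congr β.1 key hβ

theorem kdimLE_of_injective (α : Ordinal.{u}) (φ : M →ₗ[R] M')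
    (hφ : Function.Injective φ) (h : KdimLE R α M') : KdimLE R α M := by
  rw [KdimLE] at h ⊢
  intro f hf
  obtain ⟨N, hN⟩ := h (fun n => (f n).map φ) (fun n => Submodule.map_mono (hf n))
  refine ⟨N, fun n hn => ?_⟩
  rcases hN n hn with h1 | ⟨β, hβ⟩
  · left
    exact Submodule.map_injective_of_injective hφ h1
  · right
    refine ⟨β, ?_⟩
    have hk : LinearMap.ker φ ⊓ f n ≤ f (n+1) := by
      rw [LinearMap.ker_eq_bot.mpr hφ]
      simp
    exact kdimLE_congr β.1 (factorEquiv φ (f n) (f (n+1)) (hf n) hk).symm hβ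

end Transfer

section KdimAux
variable {R M M' : Type u} [Ring R] [AddCommGroup M] [Module R M]
  [AddCommGroup M'] [Module R M']

theorem kdim_eq_of_not_subsingleton (h : ¬ Subsingleton M) :
    kdim R M = ↑(sInf {a : Ordinal.{u} | KdimLE R a M}) := by
  rw [kdim, if_neg h]

theorem kdim_eq_bot_of_subsingleton (h : Subsingleton M) :
    kdim R M = ⊥ := by
  rw [kdim, if_pos h]

theorem kdimLE_unfold (R : Type u) [Ring R] (α : Ordinal.{u}) (M : Type u)
    [AddCommGroup M] [Module R M] : KdimLE R α M ↔
  (∀ f : ℕ → Submodule R M, (∀ n, f (n + 1) ≤ f n) →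
    ∃ N : ℕ, ∀ n ≥ N, f n = f (n + 1) ∨
      ∃ β : {γ : Ordinal.{u} // γ < α},
        KdimLE R β.1 (↥(f n) ⧸ (f (n + 1)).comap (f n).subtype)) := by
  rw [KdimLE]

end KdimAux

theorem exists_kdimLE (R : Type u) [Ring R] (M : Type u) [AddCommGroup M] [Module R M]
    [IsNoetherian R M] : ∃ a : Ordinal.{u}, KdimLE R a M := by
  by_contra hc
  set T : Set (Submodule R M) := {N | ¬ ∃ a : Ordinal.{u}, KdimLE R a (M ⧸ N)} with hT
  have hbot : (⊥ : Submodule R M) ∈ T := by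
    rintro ⟨a, ha⟩
    exact hc ⟨a, kdimLE_congr a (Submodule.quotEquivOfEqBot ⊥ rfl) ha⟩
  obtain ⟨N₀, hN₀, hmax⟩ := set_has_maximal_iff_noetherian.mpr ‹_› T ⟨⊥, hbot⟩
  have hqd : ∀ P : Submodule R (M ⧸ N₀), P ≠ ⊥ →
      ∃ a : Ordinal.{u}, KdimLE R a ((M ⧸ N₀) ⧸ P) := by
    intro P hP
    set N₁ := P.comap N₀.mkQ with hN₁
    have hle : N₀ ≤ N₁ := by
      intro x hx
      show N₀.mkQ x ∈ P
      have hz : N₀.mkQ x = 0 := (Submodule.Quotient.mk_eq_zero N₀).mpr hx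
      rw [hz]; exact P.zero_mem
    have hmapeq : N₁.map N₀.mkQ = P :=
      Submodule.map_comap_eq_of_surjective (Submodule.mkQ_surjective N₀) P
    have hlt : N₀ < N₁ := by
      refine lt_of_le_of_ne hle fun h => hP ?_
      rw [← hmapeq, ← h]
      exact le_bot_iff.mp (Submodule.map_le_iff_le_comap.mpr ((Submodule.ker_mkQ N₀).symm.le))
    have hN₁T : N₁ ∉ T := fun h => hmax N₁ h hlt
    rw [hT, Set.mem_setOf_eq, not_not] at hN₁T
    obtain ⟨a, ha⟩ := hN₁T
    have e0 := Submodule.quotientQuotientEquivQuotient N₀ N₁ hle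
    rw [hmapeq] at e0
    exact ⟨a, kdimLE_congr a e0.symm ha⟩
  set g : Submodule R (M ⧸ N₀) → Ordinal.{u} :=
    fun P => sInf {a : Ordinal.{u} | KdimLE R a ((M ⧸ N₀) ⧸ P)} with hg
  set γ := Order.succ (⨆ P : {P : Submodule R (M ⧸ N₀) // P ≠ ⊥}, g P.1) with hγ
  have hγM : KdimLE R γ (M ⧸ N₀) := by
    rw [kdimLE_unfold]
    intro f hf
    by_cases hb : ∃ m, f m = ⊥
    · obtain ⟨m, hm⟩ := hb
      have hanti : Antitone f := antitone_nat_of_succ_le hf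
      refine ⟨m, fun k hk => Or.inl ?_⟩
      have h1 : f k = ⊥ := le_bot_iff.mp (hm ▸ hanti hk)
      have h2 : f (k + 1) = ⊥ := le_bot_iff.mp (hm ▸ hanti (le_trans hk (Nat.le_succ k)))
      rw [h1, h2]
    · push_neg at hb
      refine ⟨0, fun k _ => Or.inr ?_⟩
      have hmem : KdimLE R (g (f (k + 1))) ((M ⧸ N₀) ⧸ f (k + 1)) :=
        csInf_mem (hqd (f (k + 1)) (hb (k + 1)))
      have hlt : g (f (k + 1)) < γ :=
        lt_of_le_of_lt (le_ciSup (Ordinal.bddAbove_range _)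
          (⟨f (k + 1), hb (k + 1)⟩ : {P : Submodule R (M ⧸ N₀) // P ≠ ⊥})) (Order.lt_succ _)
      refine ⟨⟨g (f (k + 1)), hlt⟩, ?_⟩
      set ψ : (↥(f k) ⧸ (f (k + 1)).comap (f k).subtype) →ₗ[R] ((M ⧸ N₀) ⧸ f (k + 1)) :=
        Submodule.mapQ ((f (k + 1)).comap (f k).subtype) (f (k + 1)) (f k).subtype
          (le_refl _) with hψ
      have hinj : Function.Injective ψ := by
        rw [← LinearMap.ker_eq_bot]
        rw [eq_bot_iff]
        rintro x hx
        obtain ⟨y, rfl⟩ := Submodule.mkQ_surjective _ x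
        have hx0 : ψ (Submodule.Quotient.mk y) = 0 := hx
        rw [hψ, Submodule.mapQ_apply, Submodule.Quotient.mk_eq_zero] at hx0
        rw [Submodule.mem_bot, Submodule.mkQ_apply, Submodule.Quotient.mk_eq_zero]
        exact hx0
      exact kdimLE_of_injective _ ψ hinj hmem
  exact hN₀ ⟨γ, hγM⟩

/-- If `R` is right noetherian, right Krull-homogeneous of Krull dimension `α`,
`I 1, …, I n` are ideals with each `R ⧸ I i` right Krull-homogeneous of dimension `α`,
and `K` is a right ideal containing `I = ⨅ i, I i` with `|K/I| < α`, then `K ≤ I j`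
for every `j`, hence `K = I`, and `R ⧸ I` is right Krull-homogeneous of dimension `α`. -/
theorem stmt1 {R : Type u} [Ring R] [IsNoetherian Rᵐᵒᵖ R]
    (α : WithBot Ordinal.{u})
    (hR : kdim Rᵐᵒᵖ R = α) (hRhom : IsKrullHomogeneous Rᵐᵒᵖ R α)
    (n : ℕ) (hn : 0 < n) (I : Fin n → TwoSidedIdeal R)
    (hdim : ∀ i, kdim Rᵐᵒᵖ (R ⧸ (I i).rightIdeal) = α)
    (hhom : ∀ i, IsKrullHomogeneous Rᵐᵒᵖ (R ⧸ (I i).rightIdeal) α)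
    (K : Submodule Rᵐᵒᵖ R)
    (hIK : (⨅ i, (I i).rightIdeal) ≤ K)
    (hKdim : kdim Rᵐᵒᵖ (↥K ⧸ (⨅ i, (I i).rightIdeal).comap K.subtype) < α) :
    (∀ j, K ≤ (I j).rightIdeal) ∧ K = (⨅ i, (I i).rightIdeal) ∧
      kdim Rᵐᵒᵖ (R ⧸ (⨅ i, (I i).rightIdeal)) = α ∧
      IsKrullHomogeneous Rᵐᵒᵖ (R ⧸ (⨅ i, (I i).rightIdeal)) α := by
  classical
  have hαbot : α ≠ ⊥ := by
    intro h
    rw [h] at hKdim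
    exact not_lt_bot hKdim
  obtain ⟨a, rfl⟩ := WithBot.ne_bot_iff_exists.mp hαbot
  set J : Submodule Rᵐᵒᵖ R := ⨅ i, (I i).rightIdeal with hJdef
  have hnR : ¬ Subsingleton R := by
    intro h
    rw [kdim_eq_bot_of_subsingleton h] at hR
    exact WithBot.bot_ne_coe hR
  have hSR : {b : Ordinal.{u} | KdimLE Rᵐᵒᵖ b R}.Nonempty := exists_kdimLE Rᵐᵒᵖ R
  have haR : KdimLE Rᵐᵒᵖ a R := by
    rw [kdim_eq_of_not_subsingleton hnR] at hR
    have h := WithBot.coe_inj.mp hR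
    exact h ▸ csInf_mem hSR
  have key : ∀ K' : Submodule Rᵐᵒᵖ R, J ≤ K' →
      kdim Rᵐᵒᵖ (↥K' ⧸ J.comap K'.subtype) < (a : WithBot Ordinal.{u}) →
      ∀ j, K' ≤ (I j).rightIdeal := by
    intro K' hJK' hdimK' j
    by_cases hQ : Subsingleton (↥K' ⧸ J.comap K'.subtype)
    · refine le_trans (Submodule.comap_subtype_eq_top.mp
        (Submodule.Quotient.subsingleton_iff.mp hQ)) ?_
      rw [hJdef]
      exact iInf_le _ j
    · have haQ : KdimLE Rᵐᵒᵖ a (↥K' ⧸ J.comap K'.subtype) :=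
        kdimLE_of_surjective a (J.comap K'.subtype).mkQ (Submodule.mkQ_surjective _)
          (kdimLE_of_injective a K'.subtype (Submodule.injective_subtype K') haR)
      have hQlt : sInf {b : Ordinal.{u} | KdimLE Rᵐᵒᵖ b (↥K' ⧸ J.comap K'.subtype)} < a := by
        rw [kdim_eq_of_not_subsingleton hQ] at hdimK'
        exact_mod_cast hdimK'
      by_contra hKIj
      set N' : Submodule Rᵐᵒᵖ (R ⧸ (I j).rightIdeal) := K'.map ((I j).rightIdeal).mkQ with hN'
      have hNne : N' ≠ ⊥ := by
        intro h
        exact hKIj (le_trans (Submodule.map_le_iff_le_comap.mp h.le)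
          (Submodule.ker_mkQ ((I j).rightIdeal)).le)
      have hkN := hhom j N' hNne
      have hNnt : ¬ Subsingleton ↥N' := by
        have : Nontrivial ↥N' := Submodule.nontrivial_iff_ne_bot.mpr hNne
        exact not_subsingleton _
      have hres : ∀ x ∈ K', ((I j).rightIdeal).mkQ x ∈ N' := fun x hx =>
        Submodule.mem_map_of_mem hx
      set θ : ↥K' →ₗ[Rᵐᵒᵖ] ↥N' := (((I j).rightIdeal).mkQ).restrict hres with hθ
      have hθker : J.comap K'.subtype ≤ LinearMap.ker θ := by
        rintro ⟨x, hx⟩ hxJ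
        have hxJ' : x ∈ J := hxJ
        rw [hJdef] at hxJ'
        have hxI : x ∈ (I j).rightIdeal := iInf_le (fun i => (I i).rightIdeal) j hxJ'
        have hz : ((I j).rightIdeal).mkQ x = 0 := (Submodule.Quotient.mk_eq_zero _).mpr hxI
        exact LinearMap.mem_ker.mpr (Subtype.ext hz)
      set ψ := (J.comap K'.subtype).liftQ θ hθker with hψ
      have hψs : Function.Surjective ψ := by
        rintro ⟨y, hy⟩
        obtain ⟨x, hx, rfl⟩ := hy
        exact ⟨Submodule.Quotient.mk ⟨x, hx⟩, Subtype.ext rfl⟩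
      have hsub : {b : Ordinal.{u} | KdimLE Rᵐᵒᵖ b (↥K' ⧸ J.comap K'.subtype)} ⊆
          {b : Ordinal.{u} | KdimLE Rᵐᵒᵖ b ↥N'} := fun b hb =>
        kdimLE_of_surjective b ψ hψs hb
      have hle2 : sInf {b : Ordinal.{u} | KdimLE Rᵐᵒᵖ b ↥N'} ≤
          sInf {b : Ordinal.{u} | KdimLE Rᵐᵒᵖ b (↥K' ⧸ J.comap K'.subtype)} :=
        csInf_le_csInf (OrderBot.bddBelow _) ⟨a, haQ⟩ hsub
      have hNa : sInf {b : Ordinal.{u} | KdimLE Rᵐᵒᵖ b ↥N'} = a := by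
        rw [kdim_eq_of_not_subsingleton hNnt] at hkN
        exact WithBot.coe_inj.mp hkN
      exact absurd (lt_of_le_of_lt (hNa ▸ hle2) hQlt) (lt_irrefl a)
  have hKj : ∀ j, K ≤ (I j).rightIdeal := key K hIK hKdim
  have hKJ : K = J := le_antisymm (by rw [hJdef]; exact le_iInf hKj) hIK
  have hInt : ∀ i, ¬ Subsingleton (R ⧸ (I i).rightIdeal) := by
    intro i h
    have hi := hdim i
    rw [kdim_eq_bot_of_subsingleton h] at hi
    exact WithBot.bot_ne_coe hi
  have hJtop : J ≠ ⊤ := by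
    intro h
    refine hInt ⟨0, hn⟩ (Submodule.Quotient.subsingleton_iff.mpr (top_le_iff.mp ?_))
    rw [← h, hJdef]
    exact iInf_le _ _
  have hQJnt : ¬ Subsingleton (R ⧸ J) := fun h =>
    hJtop (Submodule.Quotient.subsingleton_iff.mp h)
  have haJ : KdimLE Rᵐᵒᵖ a (R ⧸ J) :=
    kdimLE_of_surjective a J.mkQ (Submodule.mkQ_surjective J) haR
  have hJI0 : J ≤ (I ⟨0, hn⟩).rightIdeal := by rw [hJdef]; exact iInf_le _ _
  set φ0 : (R ⧸ J) →ₗ[Rᵐᵒᵖ] (R ⧸ (I ⟨0, hn⟩).rightIdeal) :=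
    Submodule.mapQ J ((I ⟨0, hn⟩).rightIdeal) LinearMap.id hJI0 with hφ0
  have hφ0s : Function.Surjective φ0 := by
    intro y
    obtain ⟨x, rfl⟩ := Submodule.mkQ_surjective _ y
    exact ⟨Submodule.Quotient.mk x, rfl⟩
  have hsub3 : {b : Ordinal.{u} | KdimLE Rᵐᵒᵖ b (R ⧸ J)} ⊆
      {b : Ordinal.{u} | KdimLE Rᵐᵒᵖ b (R ⧸ (I ⟨0, hn⟩).rightIdeal)} := fun b hb =>
    kdimLE_of_surjective b φ0 hφ0s hb
  have hI0a : sInf {b : Ordinal.{u} | KdimLE Rᵐᵒᵖ b (R ⧸ (I ⟨0, hn⟩).rightIdeal)} = a := by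
    have hi := hdim ⟨0, hn⟩
    rw [kdim_eq_of_not_subsingleton (hInt ⟨0, hn⟩)] at hi
    exact WithBot.coe_inj.mp hi
  have hlow : a ≤ sInf {b : Ordinal.{u} | KdimLE Rᵐᵒᵖ b (R ⧸ J)} := by
    rw [← hI0a]
    exact csInf_le_csInf (OrderBot.bddBelow _) ⟨a, haJ⟩ hsub3
  have hupp : sInf {b : Ordinal.{u} | KdimLE Rᵐᵒᵖ b (R ⧸ J)} ≤ a :=
    csInf_le (OrderBot.bddBelow _) haJ
  have hkJ : kdim Rᵐᵒᵖ (R ⧸ J) = (a : WithBot Ordinal.{u}) := by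
    rw [kdim_eq_of_not_subsingleton hQJnt]
    exact WithBot.coe_inj.mpr (le_antisymm hupp hlow)
  have hhomJ : IsKrullHomogeneous Rᵐᵒᵖ (R ⧸ J) (a : WithBot Ordinal.{u}) := by
    intro N hN
    have hNnt : ¬ Subsingleton ↥N := by
      have : Nontrivial ↥N := Submodule.nontrivial_iff_ne_bot.mpr hN
      exact not_subsingleton _
    have haN : KdimLE Rᵐᵒᵖ a ↥N :=
      kdimLE_of_injective a N.subtype (Submodule.injective_subtype N) haJ
    rw [kdim_eq_of_not_subsingleton hNnt]
    refine WithBot.coe_inj.mpr (le_antisymm (csInf_le (OrderBot.bddBelow _) haN) ?_)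
    by_contra hlt'
    push_neg at hlt'
    set K' : Submodule Rᵐᵒᵖ R := N.comap J.mkQ with hK'
    have hJK' : J ≤ K' := by
      intro x hx
      show J.mkQ x ∈ N
      rw [show J.mkQ x = 0 from (Submodule.Quotient.mk_eq_zero J).mpr hx]
      exact N.zero_mem
    have hmapK' : K'.map J.mkQ = N :=
      Submodule.map_comap_eq_of_surjective (Submodule.mkQ_surjective J) N
    have hker2 : LinearMap.ker J.mkQ ⊓ K' ≤ J :=
      le_trans inf_le_left (Submodule.ker_mkQ J).le
    have e1 := factorEquiv J.mkQ K' J hJK' hker2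
    have hmapJ : J.map J.mkQ = ⊥ :=
      le_bot_iff.mp (Submodule.map_le_iff_le_comap.mpr (Submodule.ker_mkQ J).symm.le)
    rw [hmapK', hmapJ] at e1
    have hcb : Submodule.comap N.subtype (⊥ : Submodule Rᵐᵒᵖ (R ⧸ J)) = ⊥ := by
      rw [Submodule.comap_bot, Submodule.ker_subtype]
    rw [hcb] at e1
    set e3 := e1.trans (Submodule.quotEquivOfEqBot (⊥ : Submodule Rᵐᵒᵖ ↥N) rfl) with he3
    have hQ'nt : ¬ Subsingleton (↥K' ⧸ J.comap K'.subtype) := by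
      intro h
      haveI := h
      exact hNnt (Equiv.subsingleton e3.symm.toEquiv)
    have hsub4 : {b : Ordinal.{u} | KdimLE Rᵐᵒᵖ b ↥N} ⊆
        {b : Ordinal.{u} | KdimLE Rᵐᵒᵖ b (↥K' ⧸ J.comap K'.subtype)} := fun b hb =>
      kdimLE_congr b e3.symm hb
    have hfd : kdim Rᵐᵒᵖ (↥K' ⧸ J.comap K'.subtype) < (a : WithBot Ordinal.{u}) := by
      rw [kdim_eq_of_not_subsingleton hQ'nt]
      exact WithBot.coe_lt_coe.mpr (lt_of_le_of_lt
        (csInf_le_csInf (OrderBot.bddBelow _) ⟨a, haN⟩ hsub4) hlt')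
    have h4 : K' = J := le_antisymm (by rw [hJdef]; exact le_iInf (key K' hJK' hfd)) hJK'
    exact hN (by rw [← hmapK', h4, hmapJ])
  exact ⟨hKj, hKJ, hkJ, hhomJ⟩
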